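/- Fix a natural code ε : ℝⁿ → ℕⁿ. A set T ⊆ ℝⁿ determines a cube tiling of ℝⁿ if and only if ε(T) = ℕⁿ and for every pair of distinct elements s, t ∈ T there is an index j ∈ {1,…,n} such that |s_j − t_j| is a positive integer. -/

import Mathlib

/-- The half-open unit cube `[0,1)ⁿ` translated by `t`. -/
def Cube {n : ℕ} (t : Fin n → ℝ) : Set (Fin n → ℝ) :=
  {x | ∀ j, t j ≤ x j ∧ x j < t j + 1}

/-- `T` determines a cube tiling of `ℝⁿ`: the cubes `[0,1)ⁿ + t`, `t ∈ T`,
are pairwise disjoint and their union is all of `ℝⁿ`. -/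
def IsCubeTiling {n : ℕ} (T : Set (Fin n → ℝ)) : Prop :=
  (∀ s ∈ T, ∀ t ∈ T, s ≠ t → Disjoint (Cube s) (Cube t)) ∧
  (⋃ t ∈ T, Cube t) = Set.univ

/-- `T ⊆ ℝ` determines a tiling of `ℝ` by unit intervals `[0,1) + t`. -/
def IsCubeTiling1 (T : Set ℝ) : Prop :=
  (∀ s ∈ T, ∀ t ∈ T, s ≠ t → Disjoint (Set.Ico s (s + 1)) (Set.Ico t (t + 1))) ∧
  (⋃ t ∈ T, Set.Ico t (t + 1)) = Set.univ

/-- The tiling determined by `T` contains a column: there are `s ∈ ℝⁿ` and a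
standard basis vector `eᵢ` such that `s + k·eᵢ ∈ T` for every `k ∈ ℤ`. -/
def ContainsColumn {n : ℕ} (T : Set (Fin n → ℝ)) : Prop :=
  ∃ s : Fin n → ℝ, ∃ i : Fin n, ∀ k : ℤ, (s + (k : ℝ) • (Pi.single i 1 : Fin n → ℝ)) ∈ T

/-- A natural code of `ℝⁿ`: each `ε j : ℝ → ℕ⁺` restricts to a bijection from
every coset `x + ℤ` onto the positive integers. -/
def IsNaturalCode {n : ℕ} (ε : Fin n → ℝ → ℕ+) : Prop :=
  ∀ j : Fin n, ∀ x : ℝ, Set.BijOn (ε j) {y : ℝ | ∃ m : ℤ, y = x + m} Set.univ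


/-- The coset `c + ℤ`. -/
def Cos (c : ℝ) : Set ℝ := {y : ℝ | ∃ m : ℤ, y = c + m}

lemma self_mem_Cos (c : ℝ) : c ∈ Cos c := ⟨0, by simp⟩

lemma add_int_mem_Cos (c : ℝ) (m : ℤ) : c + m ∈ Cos c := ⟨m, rfl⟩

lemma Cos_eq_of_mem {c y : ℝ} (h : y ∈ Cos c) : Cos y = Cos c := by
  obtain ⟨m, rfl⟩ := h
  ext z
  constructor
  · rintro ⟨k, rfl⟩; exact ⟨m + k, by push_cast; ring⟩
  · rintro ⟨k, rfl⟩; exact ⟨k - m, by push_cast; ring⟩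

lemma mem_Cos_symm {c y : ℝ} (h : y ∈ Cos c) : c ∈ Cos y := by
  rw [Cos_eq_of_mem h]; exact self_mem_Cos c

lemma mem_Cos_trans {c y z : ℝ} (h1 : z ∈ Cos y) (h2 : y ∈ Cos c) : z ∈ Cos c := by
  rw [← Cos_eq_of_mem h2]; exact h1

/-- Structure of one-dimensional tilings: the set of left endpoints is a full coset. -/
lemma oneD_coset (L : Set ℝ)
    (hdisj : ∀ s ∈ L, ∀ t ∈ L, s ≠ t → Disjoint (Set.Ico s (s + 1)) (Set.Ico t (t + 1)))
    (hcov : ∀ r : ℝ, ∃ t ∈ L, t ≤ r ∧ r < t + 1)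
    {c : ℝ} (hc : c ∈ L) : L = Cos c := by
  -- two intervals sharing a point have equal endpoints
  have key : ∀ s ∈ L, ∀ t ∈ L, ∀ r : ℝ, s ≤ r → r < s + 1 → t ≤ r → r < t + 1 → s = t := by
    intro s hs t ht r h1 h2 h3 h4
    by_contra hne
    exact Set.disjoint_left.1 (hdisj s hs t ht hne) ⟨h1, h2⟩ ⟨h3, h4⟩
  have plus : ∀ z ∈ L, z + 1 ∈ L := by
    intro z hz
    obtain ⟨d, hd, hd1, hd2⟩ := hcov (z + 1)
    -- d and z both cover the point max d z?  Instead: if d ≠ z+1 then d < z+1 so d, z overlap at max d z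
    rcases eq_or_lt_of_le hd1 with h | h
    · rwa [h] at hd
    · -- d < z + 1, then d and z intervals overlap at max d z... check: d ≤ max, max < d+1? 
      have : z = d := by
        refine key z hz d hd (max z d) (le_max_left _ _) ?_ (le_max_right _ _) ?_
        · rcases max_cases z d with ⟨h', _⟩ | ⟨h', _⟩ <;> rw [h'] <;> linarith
        · rcases max_cases z d with ⟨h', _⟩ | ⟨h', _⟩ <;> rw [h'] <;> linarith
      -- then d = z, but d + 1 > z + 1 and d ≤ z+1... d = z gives z+1 < z+1 false? hd2 : z+1 < d+1 ok fine
      exfalso; rw [← this] at h; linarith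
  have minus : ∀ z ∈ L, z - 1 ∈ L := by
    intro z hz
    obtain ⟨d, hd, hd1, hd2⟩ := hcov (z - 1)
    have hd1' : d + 1 ∈ L := plus d hd
    have : d + 1 = z := by
      refine key (d+1) hd1' z hz (max (d+1) z) (le_max_left _ _) ?_ (le_max_right _ _) ?_
      · rcases max_cases (d+1) z with ⟨h', _⟩ | ⟨h', _⟩ <;> rw [h'] <;> linarith
      · rcases max_cases (d+1) z with ⟨h', _⟩ | ⟨h', _⟩ <;> rw [h'] <;> linarith
    have : d = z - 1 := by linarith
    rwa [← this]
  have forward : ∀ m : ℤ, c + m ∈ L := by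
    intro m
    induction m using Int.induction_on with
    | zero => simpa using hc
    | succ k ih => have := plus _ ih; push_cast at this ⊢; convert this using 1; ring
    | pred k ih => have := minus _ ih; push_cast at this ⊢; convert this using 1; ring
  ext d
  constructor
  · intro hd
    set m : ℤ := ⌊d - c⌋ with hm
    have h1 : c + m ≤ d := by
      have := Int.floor_le (d - c); simp only [hm]; linarith
    have h2 : d < c + m + 1 := by
      have := Int.lt_floor_add_one (d - c); simp only [hm]; linarith
    have := key d hd (c + m) (forward m) d le_rfl (by linarith) h1 h2
    exact ⟨m, this⟩
  · rintro ⟨m, rfl⟩; exact forward m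

section Shift

variable {n : ℕ}

lemma mem_Cube_iff {t x : Fin n → ℝ} : x ∈ Cube t ↔ ∀ j, t j ≤ x j ∧ x j < t j + 1 :=
  Iff.rfl

lemma cover_of_tiling {T : Set (Fin n → ℝ)} (hT : IsCubeTiling T) (x : Fin n → ℝ) :
    ∃ t ∈ T, x ∈ Cube t := by
  have := hT.2
  have hx : x ∈ ⋃ t ∈ T, Cube t := by rw [this]; trivial
  simpa using hx

/-- The left endpoints in direction `i` of cubes whose other coordinates cover `x`. -/
def Slab (T : Set (Fin n → ℝ)) (x : Fin n → ℝ) (i : Fin n) : Set ℝ :=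
  {r : ℝ | ∃ t ∈ T, t i = r ∧ ∀ j, j ≠ i → (t j ≤ x j ∧ x j < t j + 1)}

lemma slab_unique {T : Set (Fin n → ℝ)} (hT : IsCubeTiling T) (x : Fin n → ℝ) (i : Fin n)
    {t u : Fin n → ℝ} (ht : t ∈ T) (hu : u ∈ T)
    (ht' : ∀ j, j ≠ i → (t j ≤ x j ∧ x j < t j + 1))
    (hu' : ∀ j, j ≠ i → (u j ≤ x j ∧ x j < u j + 1))
    (hi : t i = u i) : t = u := by
  by_contra hne
  have hpt : Function.update x i (t i) ∈ Cube t := by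
    intro j
    rcases eq_or_ne j i with rfl | hj
    · simp
    · simpa [Function.update_of_ne hj] using ht' j hj
  have hpt' : Function.update x i (t i) ∈ Cube u := by
    intro j
    rcases eq_or_ne j i with rfl | hj
    · simp [← hi]
    · simpa [Function.update_of_ne hj] using hu' j hj
  exact Set.disjoint_left.1 (hT.1 t ht u hu hne) hpt hpt'

lemma slab_isTiling1 {T : Set (Fin n → ℝ)} (hT : IsCubeTiling T) (x : Fin n → ℝ) (i : Fin n) :
    (∀ s ∈ Slab T x i, ∀ t ∈ Slab T x i, s ≠ t →
        Disjoint (Set.Ico s (s + 1)) (Set.Ico t (t + 1))) ∧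
    (∀ r : ℝ, ∃ t ∈ Slab T x i, t ≤ r ∧ r < t + 1) := by
  constructor
  · rintro s ⟨ts, hts, rfl, hts'⟩ t ⟨tt, htt, rfl, htt'⟩ hne
    rw [Set.disjoint_left]
    rintro r ⟨h1, h2⟩ ⟨h3, h4⟩
    have hpt : Function.update x i r ∈ Cube ts := by
      intro j
      rcases eq_or_ne j i with rfl | hj
      · simpa using ⟨h1, h2⟩
      · simpa [Function.update_of_ne hj] using hts' j hj
    have hpt' : Function.update x i r ∈ Cube tt := by
      intro j
      rcases eq_or_ne j i with rfl | hj
      · simpa using ⟨h3, h4⟩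
      · simpa [Function.update_of_ne hj] using htt' j hj
    have hne' : ts ≠ tt := fun h => hne (by rw [h])
    exact Set.disjoint_left.1 (hT.1 ts hts tt htt hne') hpt hpt'
  · intro r
    obtain ⟨t, ht, hcube⟩ := cover_of_tiling hT (Function.update x i r)
    refine ⟨t i, ⟨t, ht, rfl, ?_⟩, ?_⟩
    · intro j hj
      have := hcube j
      rwa [Function.update_of_ne hj] at this
    · have := hcube i
      rwa [Function.update_self] at this

lemma slab_eq_coset {T : Set (Fin n → ℝ)} (hT : IsCubeTiling T) (x : Fin n → ℝ) (i : Fin n)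
    {c : ℝ} (hc : c ∈ Slab T x i) : Slab T x i = Cos c :=
  oneD_coset _ (slab_isTiling1 hT x i).1 (slab_isTiling1 hT x i).2 hc

end Shift


section ShiftLemma

variable {n : ℕ}

/-- Shift a cube by `d (t i)` in direction `i`. -/
def ShiftMap (i : Fin n) (d : ℝ → ℝ) (t : Fin n → ℝ) : Fin n → ℝ :=
  Function.update t i (t i + d (t i))

lemma mem_cube_shift {i : Fin n} {d : ℝ → ℝ} {t x : Fin n → ℝ} :
    x ∈ Cube (ShiftMap i d t) ↔
      ((∀ j, j ≠ i → (t j ≤ x j ∧ x j < t j + 1)) ∧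
        (t i + d (t i) ≤ x i ∧ x i < t i + d (t i) + 1)) := by
  constructor
  · intro h
    refine ⟨fun j hj => ?_, ?_⟩
    · have := h j; rwa [ShiftMap, Function.update_of_ne hj] at this
    · have := h i; rwa [ShiftMap, Function.update_self] at this
  · rintro ⟨h1, h2⟩ j
    rcases eq_or_ne j i with rfl | hj
    · rwa [ShiftMap, Function.update_self]
    · rw [ShiftMap, Function.update_of_ne hj]; exact h1 j hj

lemma shift_existsUnique {T : Set (Fin n → ℝ)} (hT : IsCubeTiling T) (i : Fin n)
    (d : ℝ → ℝ) (hd : ∀ y : ℝ, ∀ m : ℤ, d (y + m) = d y) (x : Fin n → ℝ) :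
    ∃! t, t ∈ T ∧ x ∈ Cube (ShiftMap i d t) := by
  obtain ⟨t0, ht0, hc0⟩ := cover_of_tiling hT x
  have hslab0 : t0 i ∈ Slab T x i := ⟨t0, ht0, rfl, fun j _ => hc0 j⟩
  have hS : Slab T x i = Cos (t0 i) := slab_eq_coset hT x i hslab0
  set c : ℝ := t0 i with hc
  set D : ℝ := d c with hD
  set m : ℤ := ⌊x i - c - D⌋ with hm
  have hmem : c + (m : ℝ) ∈ Slab T x i := by rw [hS]; exact add_int_mem_Cos c m
  obtain ⟨u, hu, hui, hu'⟩ := hmem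
  have hdu : d (u i) = D := by rw [hui, hd c m]
  have hfl1 : (m : ℝ) ≤ x i - c - D := Int.floor_le _
  have hfl2 : x i - c - D < m + 1 := Int.lt_floor_add_one _
  refine ⟨u, ⟨hu, ?_⟩, ?_⟩
  · rw [mem_cube_shift]
    exact ⟨hu', by rw [hdu, hui]; constructor <;> linarith⟩
  · rintro v ⟨hv, hcv⟩
    rw [mem_cube_shift] at hcv
    obtain ⟨hv', hvi⟩ := hcv
    -- v i and u i both lie in the slab, hence in the same coset
    have hvslab : v i ∈ Slab T x i := ⟨v, hv, rfl, hv'⟩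
    have huslab : u i ∈ Slab T x i := ⟨u, hu, rfl, hu'⟩
    have hSv : Slab T x i = Cos (v i) := slab_eq_coset hT x i hvslab
    obtain ⟨k, hk⟩ : u i ∈ Cos (v i) := by rw [← hSv]; exact huslab
    have hdv : d (v i) = D := by
      have : d (u i) = d (v i) := by rw [hk, hd]
      rw [← this, hdu]
    -- coordinate i constraints force k = 0
    have hui2 : u i + D ≤ x i ∧ x i < u i + D + 1 := by
      rw [hui]; constructor <;> linarith
    have hvi2 : v i + D ≤ x i ∧ x i < v i + D + 1 := by rwa [hdv] at hvi
    have hk0 : (k : ℝ) = 0 := by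
      have h1 : (k : ℝ) < 1 := by rw [hk] at hui2; linarith [hvi2.1, hui2.2]
      have h2 : (-1 : ℝ) < k := by rw [hk] at hui2; linarith [hvi2.2, hui2.1]
      have h1' : k < 1 := by exact_mod_cast h1
      have h2' : -1 < k := by exact_mod_cast h2
      have : k = 0 := by omega
      exact_mod_cast this
    have huv : v i = u i := by rw [hk, hk0, add_zero]
    exact slab_unique hT x i hv hu hv' hu' huv

end ShiftLemma


section MultiShift

variable {n : ℕ}

lemma self_mem_Cube (s : Fin n → ℝ) : s ∈ Cube s :=
  fun j => ⟨le_rfl, by linarith⟩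

lemma shift_tiling {T : Set (Fin n → ℝ)} (hT : IsCubeTiling T) (i : Fin n)
    (d : ℝ → ℝ) (hd : ∀ y : ℝ, ∀ m : ℤ, d (y + m) = d y) :
    IsCubeTiling (ShiftMap i d '' T) ∧ Set.InjOn (ShiftMap i d) T := by
  have key := shift_existsUnique hT i d hd
  have hinj : Set.InjOn (ShiftMap i d) T := by
    intro t ht u hu h
    have h1 : t ∈ T ∧ ShiftMap i d t ∈ Cube (ShiftMap i d t) := ⟨ht, self_mem_Cube _⟩
    have h2 : u ∈ T ∧ ShiftMap i d t ∈ Cube (ShiftMap i d u) := ⟨hu, by rw [← h]; exact self_mem_Cube _⟩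
    exact ((key (ShiftMap i d t)).unique h1 h2)
  refine ⟨⟨?_, ?_⟩, hinj⟩
  · rintro a ⟨t, ht, rfl⟩ b ⟨u, hu, rfl⟩ hne
    rw [Set.disjoint_left]
    intro x hxa hxb
    exact hne (by rw [(key x).unique ⟨ht, hxa⟩ ⟨hu, hxb⟩])
  · rw [Set.eq_univ_iff_forall]
    intro x
    obtain ⟨t, ⟨ht, hx⟩, -⟩ := key x
    exact Set.mem_biUnion (Set.mem_image_of_mem _ ht) hx

/-- Shift simultaneously in all directions of a finite set `s`. -/
def MultiShift (d : Fin n → ℝ → ℝ) (s : Finset (Fin n)) (t : Fin n → ℝ) : Fin n → ℝ :=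
  fun j => if j ∈ s then t j + d j (t j) else t j

lemma multiShift_insert (d : Fin n → ℝ → ℝ) {i : Fin n} {s : Finset (Fin n)} (hi : i ∉ s) :
    MultiShift d (insert i s) = ShiftMap i (d i) ∘ MultiShift d s := by
  funext t j
  rcases eq_or_ne j i with rfl | hj
  · have h1 : MultiShift d s t j = t j := by simp [MultiShift, hi]
    simp only [Function.comp_apply, ShiftMap, Function.update_self, h1]
    simp [MultiShift]
  · simp only [Function.comp_apply, ShiftMap, Function.update_of_ne hj]
    simp [MultiShift, Finset.mem_insert, hj]

lemma multiShift_tiling {T : Set (Fin n → ℝ)} (hT : IsCubeTiling T)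
    (d : Fin n → ℝ → ℝ) (hd : ∀ j : Fin n, ∀ y : ℝ, ∀ m : ℤ, d j (y + m) = d j y)
    (s : Finset (Fin n)) :
    IsCubeTiling (MultiShift d s '' T) ∧ Set.InjOn (MultiShift d s) T := by
  induction s using Finset.induction_on with
  | empty =>
      have hid : MultiShift d ∅ = id := by funext t j; simp [MultiShift]
      rw [hid, Set.image_id]
      exact ⟨hT, Set.injOn_id T⟩
  | insert _ _ hi ih =>
      rename_i i s'
      rw [multiShift_insert d hi, Set.image_comp]
      obtain ⟨ih1, ih2⟩ := ih
      obtain ⟨h1, h2⟩ := shift_tiling ih1 i (d i) (hd i)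
      exact ⟨h1, h2.comp ih2 (Set.mapsTo_image _ _)⟩

lemma full_shift {T : Set (Fin n → ℝ)} (hT : IsCubeTiling T)
    (d : Fin n → ℝ → ℝ) (hd : ∀ j : Fin n, ∀ y : ℝ, ∀ m : ℤ, d j (y + m) = d j y) :
    IsCubeTiling ((fun t : Fin n → ℝ => fun j => t j + d j (t j)) '' T) ∧
      Set.InjOn (fun t : Fin n → ℝ => fun j => t j + d j (t j)) T := by
  have h : MultiShift d Finset.univ = fun t : Fin n → ℝ => fun j => t j + d j (t j) := by
    funext t j; simp [MultiShift]
  have := multiShift_tiling hT d hd Finset.univ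
  rwa [h] at this

end MultiShift


section Forward

open scoped Classical

variable {n : ℕ}

lemma mem_Cos_add_int_iff {c y : ℝ} (m : ℤ) : y + (m : ℝ) ∈ Cos c ↔ y ∈ Cos c := by
  constructor
  · rintro ⟨k, hk⟩; exact ⟨k - m, by push_cast; linarith⟩
  · rintro ⟨k, hk⟩; exact ⟨k + m, by push_cast; linarith⟩

lemma code_inj (ε : Fin n → ℝ → ℕ+) (hε : IsNaturalCode ε) (j : Fin n) {c y z : ℝ}
    (hy : y ∈ Cos c) (hz : z ∈ Cos c) (h : ε j y = ε j z) : y = z :=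
  (hε j c).injOn hy hz h

lemma code_surj (ε : Fin n → ℝ → ℕ+) (hε : IsNaturalCode ε) (j : Fin n) (c : ℝ) (b : ℕ+) :
    ∃ y ∈ Cos c, ε j y = b := by
  have := (hε j c).surjOn (Set.mem_univ b)
  obtain ⟨y, hy, hy'⟩ := this
  exact ⟨y, hy, hy'⟩

/-- In a cube tiling the code map is surjective. -/
lemma tiling_code_surj (ε : Fin n → ℝ → ℕ+) (hε : IsNaturalCode ε)
    {T : Set (Fin n → ℝ)} (hT : IsCubeTiling T) :
    (fun t : Fin n → ℝ => fun j => ε j (t j)) '' T = Set.univ := by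
  rw [Set.eq_univ_iff_forall]
  intro a
  choose w hw1 hw2 using fun (j : Fin n) (y : ℝ) => code_surj ε hε j y (a j)
  -- invariance of w on cosets
  have hwinv : ∀ j (y : ℝ) (m : ℤ), w j (y + m) = w j y := by
    intro j y m
    refine code_inj ε hε j (c := y) ?_ (hw1 j y) ?_
    · exact mem_Cos_trans (hw1 j (y + m)) (add_int_mem_Cos y m)
    · rw [hw2 j (y + m), hw2 j y]
  set r : ℝ → ℝ := fun z => z - ⌈z⌉ + 1 with hr
  have hr1 : ∀ z, 0 < r z := by
    intro z; have := Int.ceil_lt_add_one z; simp only [hr]; linarith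
  have hr2 : ∀ z, r z ≤ 1 := by
    intro z; have := Int.le_ceil z; simp only [hr]; linarith
  set d : Fin n → ℝ → ℝ := fun j y => r (w j y) - w j y with hd
  have hdinv : ∀ j : Fin n, ∀ y : ℝ, ∀ m : ℤ, d j (y + m) = d j y := by
    intro j y m; simp only [hd, hwinv j y m]
  obtain ⟨hTil, -⟩ := full_shift hT d hdinv
  obtain ⟨b, ⟨t, ht, rfl⟩, hb⟩ := cover_of_tiling hTil (fun _ => (1 : ℝ))
  refine ⟨t, ht, ?_⟩
  have : ∀ j, ε j (t j) = a j := by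
    intro j
    have h1 : t j + d j (t j) ≤ 1 := (hb j).1
    have h2 : (1 : ℝ) < t j + d j (t j) + 1 := (hb j).2
    -- t j = w j (t j)
    obtain ⟨m, hm⟩ := hw1 j (t j)
    -- t j + d j (t j) = r (w j (t j)) - m
    have hx : t j + d j (t j) = r (w j (t j)) - m := by
      simp only [hd]; rw [hm]; ring
    have hrw1 := hr1 (w j (t j))
    have hrw2 := hr2 (w j (t j))
    have hm1 : (m : ℝ) < 1 := by rw [hx] at h1; linarith
    have hm2 : (-1 : ℝ) < m := by rw [hx] at h2; linarith
    have hm0 : m = 0 := by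
      have a1 : m < 1 := by exact_mod_cast hm1
      have a2 : -1 < m := by exact_mod_cast hm2
      omega
    have : t j = w j (t j) := by rw [hm, hm0]; simp
    rw [this, hw2]
  exact funext this

/-- In a cube tiling any two distinct cubes are at a positive integer distance in
some coordinate. -/
lemma tiling_int_dist {T : Set (Fin n → ℝ)} (hT : IsCubeTiling T)
    {s t : Fin n → ℝ} (hs : s ∈ T) (ht : t ∈ T) (hne : s ≠ t) :
    ∃ j : Fin n, ∃ m : ℕ, 0 < m ∧ |s j - t j| = m := by
  by_contra hcon
  push_neg at hcon
  have hint : ∀ j, s j ∈ Cos (t j) → s j = t j := by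
    rintro j ⟨k, hk⟩
    rcases eq_or_ne k 0 with rfl | hk0
    · simpa using hk
    · exfalso
      refine hcon j k.natAbs (Int.natAbs_pos.2 hk0) ?_
      rw [hk]
      simp only [add_sub_cancel_left]
      rw [Nat.cast_natAbs, Int.cast_abs]
  set d : Fin n → ℝ → ℝ := fun j y =>
    if s j ∈ Cos (t j) then 0 else (if y ∈ Cos (t j) then s j - t j else 0) with hd
  have hdinv : ∀ j : Fin n, ∀ y : ℝ, ∀ m : ℤ, d j (y + m) = d j y := by
    intro j y m
    simp only [hd, mem_Cos_add_int_iff m]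
  obtain ⟨-, hinj⟩ := full_shift hT d hdinv
  have hGs : (fun j => s j + d j (s j)) = s := by
    funext j
    simp only [hd]
    by_cases h : s j ∈ Cos (t j) <;> simp [h]
  have hGt : (fun j => t j + d j (t j)) = s := by
    funext j
    simp only [hd]
    by_cases h : s j ∈ Cos (t j)
    · simp [h, hint j h]
    · simp [h, self_mem_Cos (t j)]
  have heq : (fun j => s j + d j (s j)) = (fun j => t j + d j (t j)) := by rw [hGs, hGt]
  exact hne (hinj hs ht heq)

end Forward


section Backward

lemma int_of_dist {a b : ℝ} (m : ℕ) (h : |a - b| = m) : a ∈ Cos b := by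
  rcases abs_eq (by positivity : (0:ℝ) ≤ (m:ℝ)) |>.1 h with h' | h'
  · exact ⟨(m : ℤ), by push_cast; linarith⟩
  · exact ⟨-(m : ℤ), by push_cast; linarith⟩

/-- The covering half of the backward direction, by induction on the dimension. -/
lemma code_cover : ∀ (n : ℕ) (ε : Fin n → ℝ → ℕ+), IsNaturalCode ε →
    ∀ (T : Set (Fin n → ℝ)),
    (fun t : Fin n → ℝ => fun j => ε j (t j)) '' T = Set.univ →
    (∀ s ∈ T, ∀ t ∈ T, s ≠ t → ∃ j : Fin n, ∃ m : ℕ, 0 < m ∧ |s j - t j| = m) →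
    ∀ x : Fin n → ℝ, ∃ t ∈ T, x ∈ Cube t := by
  intro n
  induction n with
  | zero =>
      intro ε hε T hsurj hpair x
      have h0 : (fun _ : Fin 0 => (1:ℕ+)) ∈
          (fun t : Fin 0 → ℝ => fun j => ε j (t j)) '' T := by rw [hsurj]; trivial
      obtain ⟨t, ht, -⟩ := h0
      exact ⟨t, ht, fun j => j.elim0⟩
  | succ n ih =>
      intro ε hε T hsurj hpair x
      set l : Fin (n+1) := Fin.last n with hl
      have hS : ∀ a : Fin (n+1) → ℕ+, ∃ t ∈ T, ∀ j, ε j (t j) = a j := by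
        intro a
        have : a ∈ (fun t : Fin (n+1) → ℝ => fun j => ε j (t j)) '' T := by rw [hsurj]; trivial
        obtain ⟨t, ht, h⟩ := this
        exact ⟨t, ht, fun j => congrFun h j⟩
      -- the set of cubes covering the last coordinate of x
      set S : Set (Fin (n+1) → ℝ) :=
        {t ∈ T | t l ≤ x l ∧ x l < t l + 1} with hSdef
      -- key construction: for each word a' there is a member of S realizing it
      have hkey : ∀ a' : Fin n → ℕ+, ∃ t ∈ S, ∀ j : Fin n, ε j.castSucc (t j.castSucc) = a' j := by
        intro a'
        obtain ⟨t0, ht0, ht0v⟩ := hS (Fin.snoc a' 1)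
        set z : ℝ := t0 l + (⌊x l - t0 l⌋ : ℤ) with hz
        have hz1 : z ≤ x l := by
          have := Int.floor_le (x l - t0 l); simp only [hz]; linarith
        have hz2 : x l < z + 1 := by
          have := Int.lt_floor_add_one (x l - t0 l); simp only [hz]; linarith
        have hzc : z ∈ Cos (t0 l) := add_int_mem_Cos _ _
        set k : ℕ+ := ε l z with hk
        obtain ⟨t, ht, htv⟩ := hS (Fin.snoc a' k)
        have htl : t l = z := by
          rcases eq_or_ne t t0 with rfl | hne
          · -- ε l (t l) = k = ε l z, both in Cos (t l)
            refine code_inj ε hε l (c := t l) (self_mem_Cos _) hzc ?_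
            have := htv l
            rw [Fin.snoc_last] at this
            rw [this, hk]
          · obtain ⟨j, m, hm, hjm⟩ := hpair t ht t0 ht0 hne
            have hjc : t j ∈ Cos (t0 j) := int_of_dist m hjm
            rcases Fin.eq_castSucc_or_eq_last j with ⟨j', rfl⟩ | rfl
            · exfalso
              have h1 := htv j'.castSucc
              have h2 := ht0v j'.castSucc
              rw [Fin.snoc_castSucc] at h1 h2
              have : t j'.castSucc = t0 j'.castSucc :=
                code_inj ε hε j'.castSucc (c := t0 j'.castSucc) hjc (self_mem_Cos _)
                  (by rw [h1, h2])
              rw [this, sub_self, abs_zero] at hjm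
              have hm0 : (m : ℝ) = 0 := hjm.symm
              have hm0' : m = 0 := by exact_mod_cast hm0
              omega
            · refine code_inj ε hε l (c := t0 l) hjc hzc ?_
              have := htv l
              rw [Fin.snoc_last] at this
              rw [this, hk]
        refine ⟨t, ⟨ht, by rw [htl]; exact ⟨hz1, hz2⟩⟩, ?_⟩
        intro j
        have := htv j.castSucc
        rwa [Fin.snoc_castSucc] at this
      -- project to the first n coordinates
      set π : (Fin (n+1) → ℝ) → (Fin n → ℝ) := fun t => fun j => t j.castSucc with hπ
      set T' : Set (Fin n → ℝ) := π '' S with hT'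
      set ε' : Fin n → ℝ → ℕ+ := fun j => ε j.castSucc with hε'def
      have hε' : IsNaturalCode ε' := fun j y => hε j.castSucc y
      have hsurj' : (fun t : Fin n → ℝ => fun j => ε' j (t j)) '' T' = Set.univ := by
        rw [Set.eq_univ_iff_forall]
        intro a'
        obtain ⟨t, htS, htv⟩ := hkey a'
        exact ⟨π t, ⟨t, htS, rfl⟩, funext fun j => htv j⟩
      have hpair' : ∀ s' ∈ T', ∀ t' ∈ T', s' ≠ t' →
          ∃ j : Fin n, ∃ m : ℕ, 0 < m ∧ |s' j - t' j| = m := by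
        rintro s' ⟨u, huS, rfl⟩ t' ⟨v, hvS, rfl⟩ hne
        have huv : u ≠ v := fun h => hne (by rw [h])
        obtain ⟨j, m, hm, hjm⟩ := hpair u huS.1 v hvS.1 huv
        rcases Fin.eq_castSucc_or_eq_last j with ⟨j', rfl⟩ | rfl
        · exact ⟨j', m, hm, hjm⟩
        · exfalso
          obtain ⟨-, hu1, hu2⟩ := huS
          obtain ⟨-, hv1, hv2⟩ := hvS
          have habs : |u l - v l| < 1 := abs_sub_lt_iff.2 ⟨by linarith, by linarith⟩
          rw [hjm] at habs
          have h1m : (1:ℝ) ≤ m := by exact_mod_cast hm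
          linarith
      obtain ⟨t', ⟨t, htS, rfl⟩, htc⟩ := ih ε' hε' T' hsurj' hpair' (fun j => x j.castSucc)
      refine ⟨t, htS.1, ?_⟩
      intro j
      rcases Fin.eq_castSucc_or_eq_last j with ⟨j', rfl⟩ | rfl
      · exact htc j'
      · exact ⟨htS.2.1, htS.2.2⟩

end Backward

/-- Characterization of cube tilings via a natural code. -/
theorem cube_tiling_iff_code {n : ℕ} (ε : Fin n → ℝ → ℕ+) (hε : IsNaturalCode ε)
    (T : Set (Fin n → ℝ)) :
    IsCubeTiling T ↔
      ((fun t : Fin n → ℝ => fun j => ε j (t j)) '' T = Set.univ ∧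
        ∀ s ∈ T, ∀ t ∈ T, s ≠ t → ∃ j : Fin n, ∃ m : ℕ, 0 < m ∧ |s j - t j| = m) := by
  constructor
  · intro hT
    exact ⟨tiling_code_surj ε hε hT, fun s hs t ht hne => tiling_int_dist hT hs ht hne⟩
  · rintro ⟨hsurj, hpair⟩
    constructor
    · intro s hs t ht hne
      obtain ⟨j, m, hm, hjm⟩ := hpair s hs t ht hne
      rw [Set.disjoint_left]
      intro x hxs hxt
      have h1 := hxs j
      have h2 := hxt j
      have habs : |s j - t j| < 1 := abs_sub_lt_iff.2
        ⟨by linarith [h1.1, h1.2, h2.1, h2.2], by linarith [h1.1, h1.2, h2.1, h2.2]⟩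
      rw [hjm] at habs
      have : (1:ℝ) ≤ m := by exact_mod_cast hm
      linarith
    · rw [Set.eq_univ_iff_forall]
      intro x
      obtain ⟨t, ht, hc⟩ := code_cover n ε hε T hsurj hpair x
      exact Set.mem_biUnion ht hc
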